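/- Under the stated assumptions, for any admissible parameter ζ one has, as an identity of column vectors, (R − ζ)·[ (R−ζ)⁻¹ + B(L−ζ)⁻¹A ]·F·|β⟩ = (τ[ζ̄]/τ)·|β⟩, where τ[ζ̄] = det(1 + A(R−ζ) B(L−ζ)⁻¹) is the inverse-shifted tau-function; equivalently, (R − ζ)·[ (R−ζ)⁻¹ + B(L−ζ)⁻¹A ]·F·|β⟩ = (1 + ⟨b|(L−ζ)⁻¹ G A |β⟩)·|β⟩. -/

import Mathlib

open Matrix

noncomputable section

section Aux

variable {n : ℕ}

lemma mul_vecMulVec' (M : Matrix (Fin n) (Fin n) ℂ) (u v : Fin n → ℂ) :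
    M * Matrix.vecMulVec u v = Matrix.vecMulVec (M.mulVec u) v := by
  ext i j
  simp [Matrix.mul_apply, Matrix.vecMulVec_apply, Matrix.mulVec, dotProduct,
    Finset.sum_mul, mul_assoc]

lemma vecMulVec_mul' (u v : Fin n → ℂ) (M : Matrix (Fin n) (Fin n) ℂ) :
    Matrix.vecMulVec u v * M = Matrix.vecMulVec u (Matrix.vecMul v M) := by
  ext i j
  simp [Matrix.mul_apply, Matrix.vecMulVec_apply, Matrix.vecMul, dotProduct,
    Finset.mul_sum, mul_assoc]

lemma vecMulVec_mulVec' (u v w : Fin n → ℂ) :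
    (Matrix.vecMulVec u v).mulVec w = (v ⬝ᵥ w) • u := by
  ext i
  simp [Matrix.mulVec, Matrix.vecMulVec_apply, dotProduct, Finset.mul_sum,
    Finset.sum_mul, mul_assoc, mul_comm, mul_left_comm]

lemma det_add_vecMulVec' {M : Matrix (Fin n) (Fin n) ℂ} (hM : IsUnit M.det)
    (u v : Fin n → ℂ) :
    (M + Matrix.vecMulVec u v).det = M.det * (1 + Matrix.vecMul v M⁻¹ ⬝ᵥ u) := by
  rw [Matrix.vecMulVec_eq Unit, Matrix.det_add_replicateCol_mul_replicateRow hM]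
  congr 1
  rw [Matrix.det_unique]
  simp [Matrix.add_apply, Matrix.one_apply, Matrix.mul_apply, Matrix.replicateRow_apply,
    Matrix.replicateCol_apply, Matrix.vecMul, dotProduct, Finset.sum_mul, mul_assoc]

end Aux

/-- as an identity of column vectors,
`(R−ζ)·[(R−ζ)⁻¹ + B(L−ζ)⁻¹A]·F·|β⟩ = (τ[ζ̄]/τ)·|β⟩`, where
`τ[ζ̄] = det(1 + A(R−ζ)B(L−ζ)⁻¹)`; equivalently the left-hand side equals
`(1 + ⟨b|(L−ζ)⁻¹GA|β⟩)·|β⟩`. -/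
theorem statement8 {n : ℕ} (hn : 1 ≤ n) (l r : Fin n → ℂ)
    (hlr : ∀ j k, l j ≠ r k) (α β a b : Fin n → ℂ)
    (A B : Matrix (Fin n) (Fin n) ℂ)
    (hA : Matrix.diagonal l * A - A * Matrix.diagonal r = Matrix.vecMulVec α a)
    (hB : Matrix.diagonal r * B - B * Matrix.diagonal l = Matrix.vecMulVec β b)
    (ζ : ℂ)
    (hζR : IsUnit (Matrix.diagonal r - ζ • (1 : Matrix (Fin n) (Fin n) ℂ)))
    (hζL : IsUnit (Matrix.diagonal l - ζ • (1 : Matrix (Fin n) (Fin n) ℂ)))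
    (hinv : IsUnit (1 + A * B))
    (hinv' : IsUnit (1 + A * (Matrix.diagonal r - ζ • 1) *
        (B * (Matrix.diagonal l - ζ • 1)⁻¹))) :
    Matrix.mulVec
        ((Matrix.diagonal r - ζ • 1) *
          ((Matrix.diagonal r - ζ • 1)⁻¹ + B * (Matrix.diagonal l - ζ • 1)⁻¹ * A) *
          (1 + B * A)⁻¹) β
      = ((1 + A * (Matrix.diagonal r - ζ • 1) * (B * (Matrix.diagonal l - ζ • 1)⁻¹)).det /
          (1 + A * B).det) • β ∧
    Matrix.mulVec
        ((Matrix.diagonal r - ζ • 1) *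
          ((Matrix.diagonal r - ζ • 1)⁻¹ + B * (Matrix.diagonal l - ζ • 1)⁻¹ * A) *
          (1 + B * A)⁻¹) β
      = (1 + Matrix.vecMul b
            ((Matrix.diagonal l - ζ • 1)⁻¹ * (1 + A * B)⁻¹ * A) ⬝ᵥ β) • β := by
  set Rz := Matrix.diagonal r - ζ • (1 : Matrix (Fin n) (Fin n) ℂ) with hRzdef
  set Lz := Matrix.diagonal l - ζ • (1 : Matrix (Fin n) (Fin n) ℂ) with hLzdef
  -- basic invertibility facts
  have hRzdet : IsUnit Rz.det := (Matrix.isUnit_iff_isUnit_det _).mp hζR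
  have hLzdet : IsUnit Lz.det := (Matrix.isUnit_iff_isUnit_det _).mp hζL
  have hABdet : IsUnit (1 + A * B).det := (Matrix.isUnit_iff_isUnit_det _).mp hinv
  have hBAdet : IsUnit (1 + B * A).det := by
    rwa [← Matrix.det_one_add_mul_comm]
  have hRz1 : Rz * Rz⁻¹ = 1 := Matrix.mul_nonsing_inv _ hRzdet
  have hLz1 : Lz * Lz⁻¹ = 1 := Matrix.mul_nonsing_inv _ hLzdet
  have hBA1 : (1 + B * A) * (1 + B * A)⁻¹ = 1 := Matrix.mul_nonsing_inv _ hBAdet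
  -- the commutation relation survives the ζ shift
  have hcomm : Rz * B = B * Lz + Matrix.vecMulVec β b := by
    have : Rz * B - B * Lz = Matrix.vecMulVec β b := by
      rw [hRzdef, hLzdef, Matrix.sub_mul, Matrix.mul_sub, Matrix.smul_mul,
        Matrix.mul_smul, one_mul, mul_one, ← hB]
      abel
    linear_combination (norm := noncomm_ring) this
  -- A commutes with resolvents of AB / BA
  have hswap : A * (1 + B * A)⁻¹ = (1 + A * B)⁻¹ * A := by
    have key : (1 + A * B) * (A * (1 + B * A)⁻¹) = A := by
      have : (1 + A * B) * A = A * (1 + B * A) := by noncomm_ring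
      rw [← Matrix.mul_assoc, this, Matrix.mul_assoc, hBA1, Matrix.mul_one]
    calc A * (1 + B * A)⁻¹ = (1 + A * B)⁻¹ * ((1 + A * B) * (A * (1 + B * A)⁻¹)) := by
          rw [← Matrix.mul_assoc, Matrix.nonsing_inv_mul _ hABdet, Matrix.one_mul]
      _ = (1 + A * B)⁻¹ * A := by rw [key]
  -- simplify the main matrix
  set w : Fin n → ℂ := Matrix.vecMul b (Lz⁻¹ * (1 + A * B)⁻¹ * A) with hw
  have hM : Rz * (Rz⁻¹ + B * Lz⁻¹ * A) * (1 + B * A)⁻¹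
      = 1 + Matrix.vecMulVec β w := by
    have h1 : Rz * (Rz⁻¹ + B * Lz⁻¹ * A)
        = 1 + B * A + Matrix.vecMulVec β b * Lz⁻¹ * A := by
      rw [Matrix.mul_add, hRz1, ← Matrix.mul_assoc, ← Matrix.mul_assoc, hcomm,
        Matrix.add_mul, Matrix.add_mul, Matrix.mul_assoc B Lz Lz⁻¹, hLz1,
        Matrix.mul_one]
      noncomm_ring
    rw [h1, Matrix.add_mul, hBA1, Matrix.mul_assoc, Matrix.mul_assoc, hswap,
      ← Matrix.mul_assoc, ← Matrix.mul_assoc, vecMulVec_mul', vecMulVec_mul',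
      vecMulVec_mul', hw, Matrix.vecMul_vecMul, Matrix.vecMul_vecMul,
      ← Matrix.mul_assoc]
  -- the vector identity
  have hvec : Matrix.mulVec (Rz * (Rz⁻¹ + B * Lz⁻¹ * A) * (1 + B * A)⁻¹) β
      = (1 + w ⬝ᵥ β) • β := by
    rw [hM, Matrix.add_mulVec, Matrix.one_mulVec, vecMulVec_mulVec', add_smul,
      one_smul]
  -- the determinant identity
  have hdet : (1 + A * Rz * (B * Lz⁻¹)).det = (1 + A * B).det * (1 + w ⬝ᵥ β) := by
    have h2 : 1 + A * Rz * (B * Lz⁻¹)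
        = (1 + A * B) + Matrix.vecMulVec (A.mulVec β) (Matrix.vecMul b Lz⁻¹) := by
      have : A * Rz * (B * Lz⁻¹) = A * (Rz * B) * Lz⁻¹ := by noncomm_ring
      have e1 : A * (B * Lz) * Lz⁻¹ = A * B := by
        rw [Matrix.mul_assoc A (B * Lz) Lz⁻¹, Matrix.mul_assoc B Lz Lz⁻¹, hLz1,
          Matrix.mul_one]
      have e2 : A * Matrix.vecMulVec β b * Lz⁻¹
          = Matrix.vecMulVec (A.mulVec β) (Matrix.vecMul b Lz⁻¹) := by
        rw [mul_vecMulVec', vecMulVec_mul']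
      rw [this, hcomm, Matrix.mul_add, Matrix.add_mul, e1, e2, add_assoc]
    rw [h2, det_add_vecMulVec' hABdet]
    congr 1
    rw [hw, Matrix.vecMul_vecMul, ← Matrix.dotProduct_mulVec, ← Matrix.dotProduct_mulVec,
      Matrix.mulVec_mulVec]
  have hτ : (1 + A * Rz * (B * Lz⁻¹)).det / (1 + A * B).det = 1 + w ⬝ᵥ β := by
    rw [hdet, mul_comm, mul_div_assoc, div_self hABdet.ne_zero, mul_one]
  exact ⟨by rw [hτ]; exact hvec, hvec⟩
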